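/- Optimality of threshold vaccination among strategies of fixed mass (reduced scalar form): let a = ∫_X S₀ > 0, η ∈ (0,1), and suppose for each admissible v (0 ≤ v ≤ S₀, ∫ v = m) the survivor count is N(v) = m + (a − m) e^{σ_∞(v) − σ₀(v)} η where σ_∞(v) ∈ [0,1) is the unique solution of σ e^{−σ} = σ₀(v) e^{−σ₀(v)} η, σ₀(v) = ∫ (β/μ)(S₀ − v) and σ₀(v) > 1 for all admissible v. Then any v* minimizing σ₀ among admissible v with ∫ v = m maximizes N: if σ₀(v*) ≤ σ₀(v) for all such v, then N(v*) ≥ N(v) for all such v. -/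

import Mathlib

private lemma fderiv16 (s : ℝ) :
    HasDerivAt (fun t : ℝ => t * Real.exp (-t)) ((1 - s) * Real.exp (-s)) s := by
  have h1 : HasDerivAt (fun t : ℝ => Real.exp (-t)) (-Real.exp (-s)) s := by
    simpa [Function.comp_def] using (Real.hasDerivAt_exp (-s)).comp s (hasDerivAt_neg s)
  have : HasDerivAt (fun t : ℝ => t * Real.exp (-t)) (1 * Real.exp (-s) + s * -Real.exp (-s)) s := (hasDerivAt_id s).mul h1
  convert this using 1
  ring

private lemma fmono16 : StrictMonoOn (fun s : ℝ => s * Real.exp (-s)) (Set.Icc 0 1) := by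
  apply strictMonoOn_of_deriv_pos (convex_Icc 0 1)
  · exact Continuous.continuousOn (by continuity)
  · intro s hs
    rw [interior_Icc] at hs
    rw [(fderiv16 s).deriv]
    exact mul_pos (by linarith [hs.2]) (Real.exp_pos _)

private lemma fanti16 : AntitoneOn (fun s : ℝ => s * Real.exp (-s)) (Set.Ici 1) := by
  apply antitoneOn_of_deriv_nonpos (convex_Ici 1)
  · exact Continuous.continuousOn (by continuity)
  · intro s _
    exact (fderiv16 s).differentiableAt.differentiableWithinAt
  · intro s hs
    rw [interior_Ici] at hs
    rw [(fderiv16 s).deriv]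
    apply mul_nonpos_of_nonpos_of_nonneg (by linarith [hs.out]) (Real.exp_pos _).le

/-- Optimality of threshold vaccination among strategies of fixed mass
(reduced scalar form): any minimizer of `σ₀` maximizes the survivor count `N`. -/
theorem stmt16 {α : Type*} (Adm : α → Prop) (σ₀ σinf N : α → ℝ) (a m η : ℝ)
    (ha : 0 < a) (hma : m ≤ a) (hη : η ∈ Set.Ioo (0:ℝ) 1)
    (hσ₀ : ∀ v, Adm v → 1 < σ₀ v)
    (hσinf : ∀ v, Adm v → σinf v ∈ Set.Ico (0:ℝ) 1 ∧
      σinf v * Real.exp (-(σinf v)) = σ₀ v * Real.exp (-(σ₀ v)) * η)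
    (hN : ∀ v, Adm v → N v = m + (a - m) * Real.exp (σinf v - σ₀ v) * η)
    (vstar : α) (hstar : Adm vstar)
    (hmin : ∀ v, Adm v → σ₀ vstar ≤ σ₀ v) :
    ∀ v, Adm v → N v ≤ N vstar := by
  intro v hv
  -- notation
  set x := σ₀ vstar with hx
  set y := σ₀ v with hy
  set s := σinf vstar with hs
  set t := σinf v with ht
  have hx1 : 1 < x := hσ₀ _ hstar
  have hy1 : 1 < y := hσ₀ _ hv
  have hxy : x ≤ y := hmin _ hv
  obtain ⟨hsI, hseq⟩ := hσinf _ hstar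
  obtain ⟨htI, hteq⟩ := hσinf _ hv
  have hη0 : 0 < η := hη.1
  -- σinf values are positive
  have hspos : 0 < s := by
    rcases lt_or_eq_of_le hsI.1 with h | h
    · exact h
    · exfalso
      have : (0:ℝ) < x * Real.exp (-x) * η :=
        mul_pos (mul_pos (by linarith) (Real.exp_pos _)) hη0
      rw [← hseq, ← h] at this; simp at this
  have htpos : 0 < t := by
    rcases lt_or_eq_of_le htI.1 with h | h
    · exact h
    · exfalso
      have : (0:ℝ) < y * Real.exp (-y) * η :=
        mul_pos (mul_pos (by linarith) (Real.exp_pos _)) hη0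
      rw [← hteq, ← h] at this; simp at this
  -- f(y) ≤ f(x)
  have hfxy : y * Real.exp (-y) ≤ x * Real.exp (-x) :=
    fanti16 hx1.le hy1.le hxy
  -- hence f(t) ≤ f(s), hence t ≤ s
  have hfts : t * Real.exp (-t) ≤ s * Real.exp (-s) := by
    rw [hteq, hseq]
    exact mul_le_mul_of_nonneg_right hfxy hη0.le
  have hts : t ≤ s := by
    by_contra hcon
    push_neg at hcon
    have := fmono16 (Set.mem_Icc.mpr ⟨hsI.1, hsI.2.le⟩)
      (Set.mem_Icc.mpr ⟨htI.1, htI.2.le⟩) hcon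
    simp only at this
    linarith
  -- rewrite N using exp(σinf - σ₀) * η = σinf / σ₀
  have key : ∀ (u w : ℝ), 0 < u → 0 < w →
      u * Real.exp (-u) = w * Real.exp (-w) * η →
      Real.exp (u - w) * η = u / w := by
    intro u w hu hw heq
    have h2 : u = w * η * Real.exp (u - w) := by
      calc u = u * Real.exp (-u) * Real.exp u := by
              rw [mul_assoc, ← Real.exp_add]; simp
        _ = w * Real.exp (-w) * η * Real.exp u := by rw [heq]
        _ = w * η * Real.exp (u - w) := by
              rw [Real.exp_sub, Real.exp_neg]
              field_simp
    rw [eq_div_iff hw.ne']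
    linear_combination -h2
  have kv : Real.exp (t - y) * η = t / y := key t y htpos (by linarith) hteq
  have kstar : Real.exp (s - x) * η = s / x := key s x hspos (by linarith) hseq
  have hratio : t / y ≤ s / x := by
    apply div_le_div₀ (le_of_lt hspos |>.trans (le_refl s)) hts (by linarith) hxy
  rw [hN _ hv, hN _ hstar]
  have e1 : (a - m) * Real.exp (t - y) * η = (a - m) * (t / y) := by
    rw [mul_assoc, kv]
  have e2 : (a - m) * Real.exp (s - x) * η = (a - m) * (s / x) := by
    rw [mul_assoc, kstar]
  rw [e1, e2] at *
  have := mul_le_mul_of_nonneg_left hratio (by linarith : (0:ℝ) ≤ a - m)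
  linarith
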